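/- Let ε be a real number with 0 < ε ≤ 1/2, and let A, C, D be points of the Euclidean plane with C ≠ A, C ≠ D, such that the angle ∠ A C D is at least 2π/3 and both dist A C and dist A D lie in the interval [1, 1 + ε]. Then dist C D < 3·ε. -/
import Mathlib


open EuclideanGeometry Real

/-- If `0 < ε ≤ 1/2`, the angle at `C` between `A` and `D` is at least `2π/3`, and both
`dist A C` and `dist A D` lie in `[1, 1 + ε]`, then `dist C D < 3·ε`. -/
theorem dist_lt_of_angle_ge_two_pi_div_three (ε : ℝ) (hε0 : 0 < ε) (hε : ε ≤ 1 / 2)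
    (A C D : EuclideanSpace ℝ (Fin 2)) (hCA : C ≠ A) (hCD : C ≠ D)
    (hangle : 2 * π / 3 ≤ ∠ A C D)
    (hAC : dist A C ∈ Set.Icc 1 (1 + ε)) (hAD : dist A D ∈ Set.Icc 1 (1 + ε)) :
    dist C D < 3 * ε := by
  obtain ⟨hAC1, hAC2⟩ := hAC
  obtain ⟨hAD1, hAD2⟩ := hAD
  have hpi : ∠ A C D ≤ π := angle_le_pi _ _ _
  have hx : (0:ℝ) ≤ 2 * π / 3 := by positivity
  have hcos : Real.cos (∠ A C D) ≤ Real.cos (2 * π / 3) :=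
    Real.cos_le_cos_of_nonneg_of_le_pi hx hpi hangle
  have hval : Real.cos (2 * π / 3) = -(1/2) := by
    have : (2 : ℝ) * π / 3 = π - π / 3 := by ring
    rw [this, Real.cos_pi_sub, Real.cos_pi_div_three]
  rw [hval] at hcos
  have hlaw := EuclideanGeometry.law_cos A C D
  have hCDpos : 0 < dist C D := dist_pos.mpr hCD
  have hDC : dist D C = dist C D := dist_comm D C
  nlinarith [sq_nonneg (dist C D), mul_le_mul_of_nonneg_left hcos
    (by positivity : (0:ℝ) ≤ 2 * dist A C * dist D C), sq_nonneg ε,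
    mul_pos hCDpos hε0, sq_nonneg (dist C D - 3 * ε)]
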